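/- The influence function of the Gini covariance matrix at F is IF(x; Σ_g, F) = 2 E[(X1 - x)(X1 - x)^T / ||X1 - x||] - 2 Σ_g(F); that is, for the contaminated distribution F_ε = (1-ε)F + ε δ_x, one has Σ_g(F_ε) = (1-ε)² Σ_g(F) + 2ε(1-ε) E[(X1-x)(X1-x)^T/||X1-x||], and its derivative in ε at ε = 0 equals the stated influence function. -/

import Mathlib

open MeasureTheory ENNReal

/-- The Gini covariance matrix of a distribution on `ℝᵈ` (entrywise). -/
noncomputable def giniCov {d : ℕ} (ν : Measure (EuclideanSpace ℝ (Fin d))) :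
    Matrix (Fin d) (Fin d) ℝ :=
  Matrix.of fun i j =>
    ∫ p : EuclideanSpace ℝ (Fin d) × EuclideanSpace ℝ (Fin d),
      ((p.1 - p.2) i * (p.1 - p.2) j) / ‖p.1 - p.2‖ ∂(ν.prod ν)


section Aux

lemma measure_smul_prod {α β : Type*} [MeasurableSpace α] [MeasurableSpace β]
    (μ : Measure α) (ν : Measure β) [SigmaFinite μ] [SigmaFinite ν] (c : ℝ≥0∞) (hc : c ≠ ⊤) :
    (c • μ).prod ν = c • (μ.prod ν) := by
  have : SigmaFinite (c • μ) := by
    lift c to NNReal using hc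
    rw [← ENNReal.smul_def]
    infer_instance
  refine Measure.prod_eq fun s t hs ht => ?_
  simp [Measure.prod_prod, mul_assoc]

lemma measure_prod_smul {α β : Type*} [MeasurableSpace α] [MeasurableSpace β]
    (μ : Measure α) (ν : Measure β) [SigmaFinite μ] [SigmaFinite ν] (c : ℝ≥0∞) (hc : c ≠ ⊤) :
    μ.prod (c • ν) = c • (μ.prod ν) := by
  have : SigmaFinite (c • ν) := by
    lift c to NNReal using hc
    rw [← ENNReal.smul_def]
    infer_instance
  refine Measure.prod_eq fun s t hs ht => ?_
  simp [Measure.prod_prod]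
  ring

lemma abs_coord_le_norm {d : ℕ} (v : EuclideanSpace ℝ (Fin d)) (i : Fin d) : |v i| ≤ ‖v‖ := by
  rw [EuclideanSpace.norm_eq]
  rw [show |v i| = Real.sqrt (‖v i‖^2) by rw [Real.sqrt_sq_eq_abs]; simp]
  apply Real.sqrt_le_sqrt
  exact Finset.single_le_sum (f := fun k => ‖v k‖^2) (fun k _ => sq_nonneg _) (Finset.mem_univ i)

lemma giniFun_bound {d : ℕ} (v : EuclideanSpace ℝ (Fin d)) (i j : Fin d) :
    |v i * v j / ‖v‖| ≤ ‖v‖ := by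
  rcases eq_or_ne v 0 with rfl | hv
  · simp
  · have hn : (0 : ℝ) < ‖v‖ := norm_pos_iff.mpr hv
    rw [abs_div, abs_of_pos hn, div_le_iff₀ hn, abs_mul]
    exact mul_le_mul (abs_coord_le_norm v i) (abs_coord_le_norm v j) (abs_nonneg _) (norm_nonneg _)

lemma giniFun_meas {d : ℕ} (i j : Fin d) :
    Measurable (fun p : EuclideanSpace ℝ (Fin d) × EuclideanSpace ℝ (Fin d) =>
      ((p.1 - p.2) i * (p.1 - p.2) j) / ‖p.1 - p.2‖) := by
  have hsub : Continuous fun p : EuclideanSpace ℝ (Fin d) × EuclideanSpace ℝ (Fin d) => p.1 - p.2 :=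
    continuous_fst.sub continuous_snd
  have hi : ∀ k : Fin d, Continuous fun p : EuclideanSpace ℝ (Fin d) × EuclideanSpace ℝ (Fin d) =>
      (p.1 - p.2) k := fun k => ((EuclideanSpace.proj k).continuous).comp hsub
  exact (((hi i).mul (hi j)).measurable).div (continuous_norm.comp hsub).measurable

lemma giniFun_meas_one {d : ℕ} (x : EuclideanSpace ℝ (Fin d)) (i j : Fin d) :
    Measurable (fun y : EuclideanSpace ℝ (Fin d) => ((y - x) i * (y - x) j) / ‖y - x‖) := by
  have hsub : Continuous fun y : EuclideanSpace ℝ (Fin d) => y - x := continuous_id.sub continuous_const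
  have hi : ∀ k : Fin d, Continuous fun y : EuclideanSpace ℝ (Fin d) => (y - x) k :=
    fun k => ((EuclideanSpace.proj k).continuous).comp hsub
  exact (((hi i).mul (hi j)).measurable).div (continuous_norm.comp hsub).measurable

lemma giniFun_int_one {d : ℕ} (ν : Measure (EuclideanSpace ℝ (Fin d))) [IsProbabilityMeasure ν]
    (hint : Integrable (fun x => ‖x‖) ν) (x : EuclideanSpace ℝ (Fin d)) (i j : Fin d) :
    Integrable (fun y => ((y - x) i * (y - x) j) / ‖y - x‖) ν := by
  refine Integrable.mono' (g := fun y => ‖y‖ + ‖x‖) (hint.add (integrable_const _))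
    (giniFun_meas_one x i j).aestronglyMeasurable ?_
  filter_upwards with y
  exact (giniFun_bound (y - x) i j).trans (norm_sub_le _ _)

lemma giniFun_int_prod {d : ℕ} (ν : Measure (EuclideanSpace ℝ (Fin d))) [IsProbabilityMeasure ν]
    (hint : Integrable (fun x => ‖x‖) ν) (i j : Fin d) :
    Integrable (fun p : EuclideanSpace ℝ (Fin d) × EuclideanSpace ℝ (Fin d) =>
      ((p.1 - p.2) i * (p.1 - p.2) j) / ‖p.1 - p.2‖) (ν.prod ν) := by
  have h1 : Integrable (fun p : EuclideanSpace ℝ (Fin d) × EuclideanSpace ℝ (Fin d) => ‖p.1‖)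
      (ν.prod ν) := by simpa using hint.mul_prod (integrable_const (1 : ℝ))
  have h2 : Integrable (fun p : EuclideanSpace ℝ (Fin d) × EuclideanSpace ℝ (Fin d) => ‖p.2‖)
      (ν.prod ν) := by simpa using (integrable_const (1 : ℝ)).mul_prod hint
  refine Integrable.mono' (h1.add h2) (giniFun_meas i j).aestronglyMeasurable ?_
  filter_upwards with p
  exact (giniFun_bound (p.1 - p.2) i j).trans (norm_sub_le _ _)

/-- symmetry of the integrand -/
lemma giniFun_symm {d : ℕ} (x y : EuclideanSpace ℝ (Fin d)) (i j : Fin d) :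
    ((x - y) i * (x - y) j) / ‖x - y‖ = ((y - x) i * (y - x) j) / ‖y - x‖ := by
  have h : x - y = -(y - x) := (neg_sub y x).symm
  rw [h, norm_neg]
  congr 1
  simp [PiLp.neg_apply]
  ring

end Aux

lemma giniCov_mix {d : ℕ} (ν : Measure (EuclideanSpace ℝ (Fin d))) [IsProbabilityMeasure ν]
    (hint : Integrable (fun x => ‖x‖) ν) (x : EuclideanSpace ℝ (Fin d))
    {ε : ℝ} (hε0 : 0 ≤ ε) (hε1 : ε ≤ 1) (i j : Fin d) :
    giniCov ((ENNReal.ofReal (1 - ε)) • ν + (ENNReal.ofReal ε) • Measure.dirac x) i j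
      = (1 - ε) ^ 2 * giniCov ν i j
        + 2 * ε * (1 - ε) * ∫ y, ((y - x) i * (y - x) j) / ‖y - x‖ ∂ν := by
  set f : EuclideanSpace ℝ (Fin d) × EuclideanSpace ℝ (Fin d) → ℝ :=
    fun p => ((p.1 - p.2) i * (p.1 - p.2) j) / ‖p.1 - p.2‖ with hf
  set a := ENNReal.ofReal (1 - ε) with ha'
  set b := ENNReal.ofReal ε with hb'
  have ha : a ≠ ⊤ := ENNReal.ofReal_ne_top
  have hb : b ≠ ⊤ := ENNReal.ofReal_ne_top
  have hat : a.toReal = 1 - ε := ENNReal.toReal_ofReal (by linarith)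
  have hbt : b.toReal = ε := ENNReal.toReal_ofReal hε0
  haveI h1 : IsFiniteMeasure (a • ν) := ν.smul_finite ha
  haveI h2 : IsFiniteMeasure (b • Measure.dirac x) := (Measure.dirac x).smul_finite hb
  -- decompose product measure
  have hprod : ((a • ν + b • Measure.dirac x).prod (a • ν + b • Measure.dirac x))
      = (a * a) • (ν.prod ν) + ((a * b) • (ν.prod (Measure.dirac x))
        + ((b * a) • ((Measure.dirac x).prod ν) + (b * b) • Measure.dirac (x, x))) := by
    rw [Measure.add_prod, Measure.prod_add, Measure.prod_add]
    rw [measure_smul_prod ν (a • ν) a ha, measure_smul_prod ν (b • Measure.dirac x) a ha,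
      measure_smul_prod (Measure.dirac x) (a • ν) b hb,
      measure_smul_prod (Measure.dirac x) (b • Measure.dirac x) b hb,
      measure_prod_smul ν ν a ha, measure_prod_smul ν (Measure.dirac x) b hb,
      measure_prod_smul (Measure.dirac x) ν a ha,
      measure_prod_smul (Measure.dirac x) (Measure.dirac x) b hb,
      Measure.dirac_prod_dirac]
    simp only [smul_smul]
    abel
  -- the three nontrivial integrals
  have hmap1 : ν.prod (Measure.dirac x) = ν.map (fun y => (y, x)) := Measure.prod_dirac x
  have hmap2 : (Measure.dirac x).prod ν = ν.map (Prod.mk x) := Measure.dirac_prod x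
  have hfm := (giniFun_meas i j : Measurable f)
  have hI1 : ∫ p, f p ∂(ν.prod (Measure.dirac x)) = ∫ y, ((y - x) i * (y - x) j) / ‖y - x‖ ∂ν := by
    rw [hmap1, integral_map (measurable_prodMk_right).aemeasurable hfm.aestronglyMeasurable]
  have hI2 : ∫ p, f p ∂((Measure.dirac x).prod ν)
      = ∫ y, ((y - x) i * (y - x) j) / ‖y - x‖ ∂ν := by
    rw [hmap2, integral_map (measurable_prodMk_left).aemeasurable hfm.aestronglyMeasurable]
    exact integral_congr_ae (Filter.Eventually.of_forall fun y => giniFun_symm x y i j)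
  have hI3 : ∫ p, f p ∂(Measure.dirac (x, x)) = 0 := by
    rw [integral_dirac' f (x, x) hfm.stronglyMeasurable]
    simp [hf]
  -- integrability pieces
  have hfint1 : Integrable f (ν.prod ν) := giniFun_int_prod ν hint i j
  have hfint2 : Integrable f (ν.prod (Measure.dirac x)) := by
    rw [hmap1]
    rw [integrable_map_measure hfm.aestronglyMeasurable (measurable_prodMk_right).aemeasurable]
    exact giniFun_int_one ν hint x i j
  have hfint3 : Integrable f ((Measure.dirac x).prod ν) := by
    rw [hmap2]
    rw [integrable_map_measure hfm.aestronglyMeasurable (measurable_prodMk_left).aemeasurable]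
    refine (giniFun_int_one ν hint x i j).congr ?_
    exact Filter.Eventually.of_forall fun y => (giniFun_symm x y i j).symm
  have hfint4 : Integrable f (Measure.dirac (x, x)) := by
    refine (integrable_const (f (x, x))).congr ?_
    rw [MeasureTheory.ae_dirac_eq]
    exact Filter.eventually_pure.mpr rfl
  have hab : a * b ≠ ⊤ := ENNReal.mul_ne_top ha hb
  have haa : a * a ≠ ⊤ := ENNReal.mul_ne_top ha ha
  have hba : b * a ≠ ⊤ := ENNReal.mul_ne_top hb ha
  have hbb : b * b ≠ ⊤ := ENNReal.mul_ne_top hb hb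
  have hG : giniCov ν i j = ∫ p, f p ∂(ν.prod ν) := rfl
  show (∫ p, f p ∂((a • ν + b • Measure.dirac x).prod (a • ν + b • Measure.dirac x))) = _
  rw [hprod]
  rw [integral_add_measure (hfint1.smul_measure haa)
      (((hfint2.smul_measure hab).add_measure ((hfint3.smul_measure hba).add_measure
        (hfint4.smul_measure hbb)))),
    integral_add_measure (hfint2.smul_measure hab)
      ((hfint3.smul_measure hba).add_measure (hfint4.smul_measure hbb)),
    integral_add_measure (hfint3.smul_measure hba) (hfint4.smul_measure hbb)]
  rw [integral_smul_measure, integral_smul_measure, integral_smul_measure, integral_smul_measure]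
  rw [hI1, hI2, hI3, hG]
  rw [ENNReal.toReal_mul, ENNReal.toReal_mul, ENNReal.toReal_mul, ENNReal.toReal_mul, hat, hbt]
  simp only [smul_eq_mul, mul_zero]
  ring

/-- The influence function of the Gini covariance matrix:
for `F_ε = (1-ε)F + εδ_x` one has
`Σ_g(F_ε) = (1-ε)² Σ_g(F) + 2ε(1-ε) E[(X₁-x)(X₁-x)ᵀ/‖X₁-x‖]`, and its (right) derivative
in `ε` at `0` is `IF(x; Σ_g, F) = 2E[(X₁-x)(X₁-x)ᵀ/‖X₁-x‖] - 2Σ_g(F)`. -/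
theorem giniCov_influence_function
    {d : ℕ} (ν : Measure (EuclideanSpace ℝ (Fin d))) [IsProbabilityMeasure ν]
    (hcont : ∀ y, ν {y} = 0)
    (hint : Integrable (fun x => ‖x‖) ν)
    (x : EuclideanSpace ℝ (Fin d)) :
    (∀ ε : ℝ, 0 ≤ ε → ε ≤ 1 → ∀ i j : Fin d,
      giniCov ((ENNReal.ofReal (1 - ε)) • ν + (ENNReal.ofReal ε) • Measure.dirac x) i j
        = (1 - ε) ^ 2 * giniCov ν i j
          + 2 * ε * (1 - ε) *
            ∫ y, ((y - x) i * (y - x) j) / ‖y - x‖ ∂ν) ∧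
    (∀ i j : Fin d,
      HasDerivWithinAt
        (fun ε : ℝ =>
          giniCov ((ENNReal.ofReal (1 - ε)) • ν + (ENNReal.ofReal ε) • Measure.dirac x) i j)
        (2 * (∫ y, ((y - x) i * (y - x) j) / ‖y - x‖ ∂ν) - 2 * giniCov ν i j)
        (Set.Ici (0 : ℝ)) 0) := by
  constructor
  · intro ε hε0 hε1 i j
    exact giniCov_mix ν hint x hε0 hε1 i j
  · intro i j
    set G := giniCov ν i j with hG
    set I := ∫ y, ((y - x) i * (y - x) j) / ‖y - x‖ ∂ν with hI
    have h1 : HasDerivAt (fun ε : ℝ => 1 - ε) (-1) 0 := by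
      exact (hasDerivAt_id' 0).const_sub 1
    have h2 : HasDerivAt (fun ε : ℝ => (1 - ε) ^ 2) (-2) 0 := by
      have := h1.pow 2
      norm_num at this
      exact this
    have h3 : HasDerivAt (fun ε : ℝ => 2 * ε * (1 - ε)) 2 0 := by
      have h4 : HasDerivAt (fun ε : ℝ => 2 * ε) 2 0 := by
        simpa using (hasDerivAt_id (0 : ℝ)).const_mul 2
      have := h4.mul h1
      norm_num at this
      exact this
    have hg : HasDerivAt (fun ε : ℝ => (1 - ε) ^ 2 * G + 2 * ε * (1 - ε) * I)
        (2 * I - 2 * G) 0 := by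
      have := (h2.mul_const G).add (h3.mul_const I)
      exact this.congr_deriv (by ring)
    refine (hg.hasDerivWithinAt).congr_of_eventuallyEq ?_ ?_
    · filter_upwards [Icc_mem_nhdsGE_of_mem (Set.mem_Ico.mpr ⟨le_refl (0:ℝ), zero_lt_one⟩)]
        with ε hε
      exact giniCov_mix ν hint x hε.1 hε.2 i j
    · have := giniCov_mix ν hint x (le_refl (0:ℝ)) zero_le_one i j
      simpa [hG] using this
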